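/- Let T be a J-unitary operator on K. Then (V(T) + V(T)*)/2 = (1 + T)(1 + T*T)^{-1}(1 + T)* − 1. -/

import Mathlib

noncomputable section

open ContinuousLinearMap

variable {H : Type*} [NormedAddCommGroup H] [InnerProductSpace ℂ H] [CompleteSpace H]
  [TopologicalSpace.SeparableSpace H]

local notation "K" => WithLp 2 (H × H)

/-- The 2×2 block operator `[[a,b],[c,d]]` on `K = H ⊕ H`. -/
def blk (a b c d : H →L[ℂ] H) : K →L[ℂ] K :=
  (((WithLp.prodContinuousLinearEquiv 2 ℂ H H).symm : (H × H) →L[ℂ] K).comp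
      ((((a.comp (fst ℂ H H)) + (b.comp (snd ℂ H H))).prod
        ((c.comp (fst ℂ H H)) + (d.comp (snd ℂ H H)))))).comp
    ((WithLp.prodContinuousLinearEquiv 2 ℂ H H : K →L[ℂ] (H × H)))

/-- The fundamental symmetry `J = [[1,0],[0,-1]]`. -/
def fundJ : K →L[ℂ] K := blk 1 0 0 (-1)

/-- A bounded operator `T` on the Krein space `(K, J)` is `J`-unitary if it is invertible
and `T* J T = J`. -/
def IsJUnitary (T : K →L[ℂ] K) : Prop :=
  IsUnit T ∧ star T * fundJ * T = fundJ

section Aux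

set_option linter.unusedSectionVars false

lemma blk_apply (a b c d : H →L[ℂ] H) (x : K) :
    blk a b c d x = (WithLp.prodContinuousLinearEquiv 2 ℂ H H).symm
      (a ((WithLp.prodContinuousLinearEquiv 2 ℂ H H) x).1
        + b ((WithLp.prodContinuousLinearEquiv 2 ℂ H H) x).2,
       c ((WithLp.prodContinuousLinearEquiv 2 ℂ H H) x).1
        + d ((WithLp.prodContinuousLinearEquiv 2 ℂ H H) x).2) := rfl

lemma blk_add (a b c d a' b' c' d' : H →L[ℂ] H) :
    blk a b c d + blk a' b' c' d' = blk (a+a') (b+b') (c+c') (d+d') := by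
  ext x
  simp only [ContinuousLinearMap.add_apply, blk_apply]
  rw [← map_add]
  simp only [Prod.mk_add_mk]
  congr 2 <;> abel

lemma blk_mul (a b c d a' b' c' d' : H →L[ℂ] H) :
    blk a b c d * blk a' b' c' d'
      = blk (a*a'+b*c') (a*b'+b*d') (c*a'+d*c') (c*b'+d*d') := by
  ext x
  simp only [ContinuousLinearMap.mul_apply, blk_apply, ContinuousLinearEquiv.apply_symm_apply,
    map_add, ContinuousLinearMap.add_apply, ContinuousLinearMap.mul_apply]
  congr 2 <;> abel

lemma blk_one : (blk 1 0 0 1 : K →L[ℂ] K) = 1 := by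
  ext x
  simp [blk_apply]
  rfl

lemma pCLE_fst (x : K) : ((WithLp.prodContinuousLinearEquiv 2 ℂ H H) x).1 = x.ofLp.1 := rfl
lemma pCLE_snd (x : K) : ((WithLp.prodContinuousLinearEquiv 2 ℂ H H) x).2 = x.ofLp.2 := rfl
lemma pCLE_symm_fst (p : H × H) :
    ((WithLp.prodContinuousLinearEquiv 2 ℂ H H).symm p).ofLp.1 = p.1 := rfl
lemma pCLE_symm_snd (p : H × H) :
    ((WithLp.prodContinuousLinearEquiv 2 ℂ H H).symm p).ofLp.2 = p.2 := rfl

lemma blk_star (a b c d : H →L[ℂ] H) :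
    star (blk a b c d) = blk (star a) (star c) (star b) (star d) := by
  rw [star_eq_adjoint]
  symm
  rw [eq_adjoint_iff]
  intro x y
  simp only [blk_apply, WithLp.prod_inner_apply, star_eq_adjoint,
    pCLE_fst, pCLE_snd, pCLE_symm_fst, pCLE_symm_snd,
    inner_add_left, inner_add_right, adjoint_inner_left]
  ring

lemma blk_ext (a b c d a' b' c' d' : H →L[ℂ] H)
    (h : blk a b c d = blk a' b' c' d') : a = a' ∧ b = b' ∧ c = c' ∧ d = d' := by
  have key : ∀ u v : H, (a u + b v, c u + d v) = (a' u + b' v, c' u + d' v) := by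
    intro u v
    have := congrArg (fun (T : K →L[ℂ] K) =>
      (WithLp.prodContinuousLinearEquiv 2 ℂ H H)
        (T ((WithLp.prodContinuousLinearEquiv 2 ℂ H H).symm (u, v)))) h
    simpa [blk_apply] using this
  refine ⟨?_, ?_, ?_, ?_⟩ <;> ext u
  · simpa using congrArg Prod.fst (key u 0)
  · simpa using congrArg Prod.fst (key 0 u)
  · simpa using congrArg Prod.snd (key u 0)
  · simpa using congrArg Prod.snd (key 0 u)

lemma blk_congr {a b c d a' b' c' d' : H →L[ℂ] H}
    (h1 : a = a') (h2 : b = b') (h3 : c = c') (h4 : d = d') :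
    blk a b c d = blk a' b' c' d' := by rw [h1, h2, h3, h4]

/-- In a Hilbert space, `1 + y*y` is invertible. -/
lemma isUnit_one_add_star_mul_self (y : H →L[ℂ] H) : IsUnit (1 + star y * y) := by
  apply ContinuousLinearMap.isUnit_of_forall_le_norm_inner_map _ (c := 1) one_pos
  intro x
  have h : (inner ℂ ((1 + star y * y) x) x : ℂ) = ((‖x‖ : ℂ))^2 + ((‖y x‖ : ℂ))^2 := by
    simp only [ContinuousLinearMap.add_apply, ContinuousLinearMap.mul_apply, ContinuousLinearMap.one_apply, inner_add_left,
      star_eq_adjoint, adjoint_inner_left, inner_self_eq_norm_sq_to_K]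
    norm_cast
  have h2 : ((‖x‖ : ℂ))^2 + ((‖y x‖ : ℂ))^2 = ((‖x‖^2 + ‖y x‖^2 : ℝ) : ℂ) := by
    push_cast; ring
  rw [h, h2]
  have hnn : (0:ℝ) ≤ ‖x‖^2 + ‖y x‖^2 := by positivity
  have h4 : ‖(((‖x‖^2 + ‖y x‖^2 : ℝ)) : ℂ)‖ = ‖x‖^2 + ‖y x‖^2 := by
    rw [Complex.norm_real, Real.norm_of_nonneg hnn]
  rw [h4]
  have h3 : (0:ℝ) ≤ ‖y x‖^2 := by positivity
  simp only [NNReal.coe_one, mul_one]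
  linarith

lemma left_inv_eq_right {M : Type*} [Monoid M] {x l : M} (hx : IsUnit x) (h : l * x = 1) :
    x * l = 1 := by
  obtain ⟨u, rfl⟩ := hx
  have hl : l = ↑u⁻¹ := by
    calc l = l * (↑u * ↑u⁻¹) := by rw [Units.mul_inv, mul_one]
    _ = ↑u⁻¹ := by rw [← mul_assoc, h, one_mul]
  rw [hl, Units.mul_inv]

lemma isUnit_of_mul_both {M : Type*} [Monoid M] {x y : M}
    (h1 : IsUnit (y * x)) (h2 : IsUnit (x * y)) : IsUnit x := by
  obtain ⟨u, hu⟩ := h1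
  obtain ⟨v, hv⟩ := h2
  have hl : (↑u⁻¹ * y) * x = 1 := by rw [mul_assoc, ← hu, Units.inv_mul]
  have hr : x * (y * ↑v⁻¹) = 1 := by rw [← mul_assoc, ← hv, Units.mul_inv]
  have hlr : (↑u⁻¹ * y : M) = y * ↑v⁻¹ := by
    calc (↑u⁻¹ * y : M) = (↑u⁻¹ * y) * (x * (y * ↑v⁻¹)) := by rw [hr, mul_one]
    _ = ((↑u⁻¹ * y) * x) * (y * ↑v⁻¹) := by simp only [mul_assoc]
    _ = y * ↑v⁻¹ := by rw [hl, one_mul]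
  exact ⟨⟨x, ↑u⁻¹ * y, by rw [hlr]; exact hr, hl⟩, rfl⟩

end Aux

/-- Proposition 3.14 of the paper: for a `J`-unitary
`T = [[a,b],[c,d]]` with associated unitary `V(T) = [[(a*)⁻¹, bd⁻¹],[−d⁻¹c, d⁻¹]]`,
the real part of `V(T)` is given by `(1+T)(1+T*T)⁻¹(1+T)* − 1`. -/
theorem re_V_eq (a b c d : H →L[ℂ] H) (hT : IsJUnitary (blk a b c d)) :
    ((2 : ℂ)⁻¹ • (blk (Ring.inverse (star a)) (b * Ring.inverse d)
        (-(Ring.inverse d * c)) (Ring.inverse d)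
      + star (blk (Ring.inverse (star a)) (b * Ring.inverse d)
        (-(Ring.inverse d * c)) (Ring.inverse d))))
      = (1 + blk a b c d)
          * Ring.inverse (1 + star (blk a b c d) * blk a b c d)
          * star (1 + blk a b c d) - 1 := by
  obtain ⟨hU, hJ⟩ := hT
  set T := blk a b c d with hTdef
  -- Relations from T* J T = J
  have hJ' : star (blk a b c d) * blk 1 0 0 (-1) * blk a b c d = blk 1 0 0 (-1) := hJ
  rw [blk_star, blk_mul, blk_mul] at hJ'
  obtain ⟨e1, e2, e3, e4⟩ := blk_ext _ _ _ _ _ _ _ _ hJ'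
  simp only [mul_one, mul_zero, add_zero, zero_add, mul_neg, neg_mul, one_mul] at e1 e2 e3 e4
  rw [← sub_eq_add_neg] at e1 e2 e3 e4
  have h1 : star a * a = 1 + star c * c := by rwa [sub_eq_iff_eq_add] at e1
  have h2 : star a * b = star c * d := by rwa [sub_eq_zero] at e2
  have h3 : star b * a = star d * c := by rwa [sub_eq_zero] at e3
  have h4 : star d * d = 1 + star b * b := by
    rw [sub_eq_iff_eq_add] at e4; rw [e4]; abel
  -- T J T* = J
  have hJJ : (fundJ : K →L[ℂ] K) * fundJ = 1 := by
    show blk 1 0 0 (-1) * blk 1 0 0 (-1) = 1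
    rw [blk_mul, ← blk_one]
    exact blk_congr (by simp) (by simp) (by simp) (by simp)
  have hL : (fundJ * star T * fundJ) * T = 1 := by
    calc (fundJ * star T * fundJ) * T = fundJ * (star T * fundJ * T) := by
          simp only [mul_assoc]
    _ = fundJ * fundJ := by rw [hJ]
    _ = 1 := hJJ
  have h5 : T * (fundJ * star T * fundJ) = 1 := left_inv_eq_right hU hL
  have hJ2 : T * fundJ * star T = fundJ := by
    have hz : T * fundJ * star T * fundJ = 1 := by
      calc T * fundJ * star T * fundJ = T * (fundJ * star T * fundJ) := by
            simp only [mul_assoc]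
      _ = 1 := h5
    calc T * fundJ * star T = T * fundJ * star T * (fundJ * fundJ) := by
          rw [hJJ, mul_one]
    _ = (T * fundJ * star T * fundJ) * fundJ := by simp only [mul_assoc]
    _ = fundJ := by rw [hz, one_mul]
  have hJ2' : blk a b c d * blk 1 0 0 (-1) * star (blk a b c d) = blk 1 0 0 (-1) := hJ2
  rw [blk_star, blk_mul, blk_mul] at hJ2'
  obtain ⟨f1, f2, f3, f4⟩ := blk_ext _ _ _ _ _ _ _ _ hJ2'
  simp only [mul_one, mul_zero, add_zero, zero_add, mul_neg, neg_mul, one_mul] at f1 f4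
  rw [← sub_eq_add_neg] at f1 f4
  have k1 : a * star a = 1 + b * star b := by rwa [sub_eq_iff_eq_add] at f1
  have k4 : d * star d = 1 + c * star c := by
    rw [sub_eq_iff_eq_add] at f4; rw [f4]; abel
  -- a and d are invertible
  have ha : IsUnit a := by
    apply isUnit_of_mul_both (y := star a)
    · rw [h1]; exact isUnit_one_add_star_mul_self c
    · rw [k1]
      have := isUnit_one_add_star_mul_self (star b)
      rwa [star_star] at this
  have hd : IsUnit d := by
    apply isUnit_of_mul_both (y := star d)
    · rw [h4]; exact isUnit_one_add_star_mul_self b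
    · rw [k4]
      have := isUnit_one_add_star_mul_self (star c)
      rwa [star_star] at this
  set di := Ring.inverse d with hdi
  set ai := Ring.inverse (star a) with hai
  have hd1 : d * di = 1 := Ring.mul_inverse_cancel d hd
  have hd2 : di * d = 1 := Ring.inverse_mul_cancel d hd
  have hsa1 : star a * ai = 1 := Ring.mul_inverse_cancel _ ha.star
  -- S, R and their inverses
  set S : K →L[ℂ] K := blk 1 0 c d with hS
  set Si : K →L[ℂ] K := blk 1 0 (-(di * c)) di with hSi
  set R : K →L[ℂ] K := blk a b 0 1 with hR
  have hSSi : S * Si = 1 := by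
    rw [hS, hSi, blk_mul, ← blk_one]
    refine blk_congr (by simp) (by simp) ?_ (by simp [hd1])
    rw [mul_one, mul_neg, ← mul_assoc, hd1, one_mul]
    abel
  have hSiS : Si * S = 1 := by
    rw [hS, hSi, blk_mul, ← blk_one]
    exact blk_congr (by simp) (by simp) (by simp) (by simp [hd2])
  have hRu : IsUnit R := by
    refine ⟨⟨R, blk (Ring.inverse a) (-(Ring.inverse a * b)) 0 1, ?_, ?_⟩, rfl⟩
    · rw [hR, blk_mul, ← blk_one]
      refine blk_congr (by simp [Ring.mul_inverse_cancel a ha]) ?_ (by simp) (by simp)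
      rw [mul_one, mul_neg, ← mul_assoc, Ring.mul_inverse_cancel a ha, one_mul,
        neg_add_cancel]
    · rw [hR, blk_mul, ← blk_one]
      refine blk_congr (by simp [Ring.inverse_mul_cancel a ha]) ?_ (by simp) (by simp)
      rw [neg_mul, mul_one, add_neg_cancel]
  have hSiu : IsUnit Si := ⟨⟨Si, S, hSiS, hSSi⟩, rfl⟩
  -- V(T) = R * Si
  set Vb : K →L[ℂ] K := blk ai (b * di) (-(di * c)) di with hVb
  have hVS : Vb * S = R := by
    rw [hVb, hS, hR, blk_mul]
    refine blk_congr ?_ ?_ ?_ ?_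
    · -- ai * 1 + b * di * c = a
      apply ha.star.mul_left_cancel
      have key : star a * (b * di * c) = star c * c := by
        simp only [← mul_assoc]
        rw [h2, mul_assoc (star c) d di, hd1, mul_one]
      rw [mul_one, mul_add, hsa1, key, h1]
    · rw [mul_zero, zero_add, mul_assoc, hd2, mul_one]
    · rw [neg_mul, mul_one, neg_add_cancel]
    · rw [mul_zero, zero_add, hd2]
  have hV : Vb = R * Si := by
    rw [← hVS, mul_assoc, hSSi, mul_one]
  set V : K →L[ℂ] K := R * Si with hVdef
  have hVu : IsUnit V := hRu.mul hSiu
  -- star R * R = star S * S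
  have hRR : star R * R = star S * S := by
    rw [hR, hS, blk_star, blk_star, blk_mul, blk_mul]
    refine blk_congr ?_ ?_ ?_ ?_
    · simp [h1]
    · simp [h2]
    · simp [h3]
    · simp only [star_one, mul_zero, zero_mul, zero_add, add_zero, one_mul, mul_one]
      rw [h4]; abel
  -- star V * V = 1  and  V * star V = 1
  have hsVV : star V * V = 1 := by
    rw [hVdef, star_mul]
    calc star Si * star R * (R * Si) = star Si * (star R * R) * Si := by
          simp only [mul_assoc]
    _ = star Si * (star S * S) * Si := by rw [hRR]
    _ = star Si * star S * (S * Si) := by simp only [mul_assoc]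
    _ = star (S * Si) * (S * Si) := by rw [star_mul]
    _ = 1 := by rw [hSSi, star_one, one_mul]
  have hVsV : V * star V = 1 := left_inv_eq_right hVu hsVV
  -- 1 + T*T = 2 • (S*S)
  have hM : 1 + star T * T = (2:ℂ) • (star S * S) := by
    have h2s : ((2:ℂ) • (star S * S)) = star S * S + star S * S :=
      two_smul ℂ (star S * S)
    rw [h2s, hTdef, hS, blk_star, blk_star, blk_mul, blk_mul, ← blk_one, blk_add, blk_add]
    refine blk_congr ?_ ?_ ?_ ?_
    · simp only [one_mul, mul_one, star_one, star_zero, zero_mul, mul_zero, zero_add, add_zero]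
      rw [h1]; abel
    · simp only [one_mul, mul_zero, zero_add, add_zero, star_one, star_zero, zero_mul]
      rw [h2]
    · simp only [one_mul, mul_zero, zero_mul, zero_add, add_zero, star_one, star_zero]
      rw [h3]
    · simp only [mul_zero, zero_mul, zero_add, add_zero, star_one, star_zero, one_mul, mul_one]
      rw [h4]; abel
  -- inverse of 1 + T*T
  set N : K →L[ℂ] K := (2:ℂ)⁻¹ • (Si * star Si) with hNdef
  have key1 : star S * S * (Si * star Si) = 1 := by
    calc star S * S * (Si * star Si) = star S * ((S * Si) * star Si) := by
          simp only [mul_assoc]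
    _ = star S * star Si := by rw [hSSi, one_mul]
    _ = star (Si * S) := (star_mul _ _).symm
    _ = 1 := by rw [hSiS, star_one]
  have key2 : (Si * star Si) * (star S * S) = 1 := by
    calc (Si * star Si) * (star S * S) = Si * ((star Si * star S) * S) := by
          simp only [mul_assoc]
    _ = Si * (star (S * Si) * S) := by rw [star_mul]
    _ = Si * S := by rw [hSSi, star_one, one_mul]
    _ = 1 := hSiS
  have hMN : (1 + star T * T) * N = 1 := by
    rw [hM, hNdef, smul_mul_assoc, mul_smul_comm, smul_smul, key1,
      show ((2:ℂ) * (2:ℂ)⁻¹) = 1 by norm_num, one_smul]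
  have hNM : N * (1 + star T * T) = 1 := by
    rw [hM, hNdef, smul_mul_assoc, mul_smul_comm, smul_smul, key2,
      show ((2:ℂ)⁻¹ * (2:ℂ)) = 1 by norm_num, one_smul]
  have hRinv : Ring.inverse (1 + star T * T) = N := by
    rw [show (1 + star T * T)
        = ((⟨1 + star T * T, N, hMN, hNM⟩ : (K →L[ℂ] K)ˣ) : K →L[ℂ] K) from rfl,
      Ring.inverse_unit]
    rfl
  -- 1 + T = S + R
  have h1T : 1 + T = S + R := by
    rw [hTdef, hS, hR, ← blk_one, blk_add, blk_add]
    exact blk_congr (by abel) (by abel) (by abel) (by abel)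
  -- expansion
  have hA : star Si * star S = 1 := by rw [← star_mul, hSSi, star_one]
  have hB : star Si * star R = star V := by rw [← star_mul, hVdef]
  have t1 : S * (Si * star Si) * star S = 1 := by
    calc S * (Si * star Si) * star S = (S * Si) * (star Si * star S) := by
          simp only [mul_assoc]
    _ = 1 := by rw [hSSi, hA, one_mul]
  have t2 : S * (Si * star Si) * star R = star V := by
    calc S * (Si * star Si) * star R = (S * Si) * (star Si * star R) := by
          simp only [mul_assoc]
    _ = star V := by rw [hSSi, hB, one_mul]
  have t3 : R * (Si * star Si) * star S = V := by
    calc R * (Si * star Si) * star S = (R * Si) * (star Si * star S) := by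
          simp only [mul_assoc]
    _ = V := by rw [hA, ← hVdef, mul_one]
  have t4 : R * (Si * star Si) * star R = 1 := by
    calc R * (Si * star Si) * star R = (R * Si) * (star Si * star R) := by
          simp only [mul_assoc]
    _ = 1 := by rw [hB, ← hVdef, hVsV]
  have expand : (S + R) * (Si * star Si) * (star S + star R)
      = 1 + star V + (V + 1) := by
    simp only [add_mul, mul_add]
    rw [t1, t2, t3, t4]
    abel
  -- put it together
  rw [hRinv, h1T, hNdef]
  have hstar : star (S + R) = star S + star R := star_add S R
  rw [hstar, mul_smul_comm, smul_mul_assoc, expand, hV]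
  module
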